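/- Every formally real, finite dimensional unital commutative real algebra is the direct sum of finitely many Weil algebras. -/

import Mathlib

/-- A commutative real unital algebra is *formally real* if `1 + a₁² + ⋯ + aₙ²`
is invertible for all `a₁, …, aₙ`. -/
def FormallyReal (A : Type*) [CommRing A] [Algebra ℝ A] : Prop :=
  ∀ (n : ℕ) (a : Fin n → A), IsUnit (1 + ∑ i, (a i) ^ 2)

/-- A *Weil algebra* is a real commutative unital algebra of the form
`ℝ·1 ⊕ N`, where `N` is a finite dimensional ideal of nilpotent elements. -/
def IsWeilAlgebra (A : Type*) [CommRing A] [Algebra ℝ A] : Prop :=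
  ∃ N : Ideal A, (∀ x ∈ N, IsNilpotent x) ∧ FiniteDimensional ℝ N ∧
    ∀ a : A, ∃! p : ℝ × N, a = algebraMap ℝ A p.1 + (p.2 : A)

open Module Function
lemma FormallyReal.of_surjective {A B : Type*} [CommRing A] [Algebra ℝ A] [CommRing B]
    [Algebra ℝ B] (f : A →ₐ[ℝ] B) (hf : Function.Surjective f) (hA : FormallyReal A) :
    FormallyReal B := by
  intro n b
  choose a ha using fun i => hf (b i)
  have := (hA n a).map f
  simpa [map_add, map_sum, map_pow, ha] using this

lemma algebraMap_surjective_of_formallyReal (K : Type*) [Field K] [Algebra ℝ K]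
    [FiniteDimensional ℝ K] (hK : FormallyReal K) :
    Function.Surjective (algebraMap ℝ K) := by
  have : Algebra.IsAlgebraic ℝ K := Algebra.IsAlgebraic.of_finite ℝ K
  let φ : K →ₐ[ℝ] ℂ := IsAlgClosed.lift
  have hinj : Function.Injective φ := φ.toRingHom.injective
  have hle : finrank ℝ K ≤ 2 := by
    have := LinearMap.finrank_le_finrank_of_injective (f := φ.toLinearMap) hinj
    simpa [Complex.finrank_real_complex] using this
  have hpos : 0 < finrank ℝ K := finrank_pos
  have h12 : finrank ℝ K = 1 ∨ finrank ℝ K = 2 := by omega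
  rcases h12 with h1 | h2
  · have hb : (⊥ : Subalgebra ℝ K) = ⊤ := Subalgebra.bot_eq_top_of_finrank_eq_one h1
    intro x
    have : x ∈ (⊥ : Subalgebra ℝ K) := hb.symm ▸ Algebra.mem_top
    exact Algebra.mem_bot.1 this
  · exfalso
    have hsurj : Function.Surjective φ.toLinearMap := by
      refine (LinearMap.injective_iff_surjective_of_finrank_eq_finrank ?_).1 hinj
      simp [h2, Complex.finrank_real_complex]
    obtain ⟨x, hx⟩ := hsurj Complex.I
    have hx0 : (1 : K) + x ^ 2 = 0 := by
      apply hinj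
      have : φ x = Complex.I := hx
      simp [map_add, map_pow, this, Complex.I_sq]
    have := hK 1 ![x]
    rw [Fin.sum_univ_one] at this
    simp only [Matrix.cons_val_zero] at this
    rw [hx0] at this
    exact zero_ne_one (isUnit_zero_iff.1 this)

lemma iInf_le_prod_of_pairwise_coprime {R : Type*} [CommRing R] {ι : Type*}
    (f : ι → Ideal R) (hf : Pairwise (IsCoprime on f)) (s : Finset ι) :
    (⨅ i ∈ s, f i) ≤ ∏ i ∈ s, f i := by
  classical
  induction s using Finset.induction with
  | empty => simp [Ideal.one_eq_top]
  | @insert a s ha ih =>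
    have hcop : IsCoprime (f a) (⨅ j ∈ s, f j) :=
      Ideal.isCoprime_biInf fun j hj => hf (fun h => ha (h ▸ hj))
    rw [Finset.iInf_insert, Finset.prod_insert ha, Ideal.inf_eq_mul_of_isCoprime hcop]
    exact Ideal.mul_mono_right ih

lemma isWeilAlgebra_quotient_pow {A : Type} [CommRing A] [Algebra ℝ A] [FiniteDimensional ℝ A]
    (hA : FormallyReal A) (I : Ideal A) (hI : I.IsMaximal) {m : ℕ} (hm : m ≠ 0) :
    IsWeilAlgebra (A ⧸ I ^ m) := by
  haveI := hI
  letI : Field (A ⧸ I) := Ideal.Quotient.field I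
  have hFDq : FiniteDimensional ℝ (A ⧸ I) :=
    Module.Finite.of_surjective (Ideal.Quotient.mkₐ ℝ I).toLinearMap
      Ideal.Quotient.mk_surjective
  have hFR : FormallyReal (A ⧸ I) :=
    FormallyReal.of_surjective (Ideal.Quotient.mkₐ ℝ I) Ideal.Quotient.mk_surjective hA
  have hsurj := algebraMap_surjective_of_formallyReal _ hFR
  set N : Ideal (A ⧸ I ^ m) := I.map (Ideal.Quotient.mk (I ^ m)) with hNdef
  have hFDB : FiniteDimensional ℝ (A ⧸ I ^ m) :=
    Module.Finite.of_surjective (Ideal.Quotient.mkₐ ℝ (I ^ m)).toLinearMap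
      Ideal.Quotient.mk_surjective
  let π : A ⧸ I ^ m →+* A ⧸ I := Ideal.Quotient.factor (Ideal.pow_le_self hm)
  have hπalg : ∀ r : ℝ, π (algebraMap ℝ (A ⧸ I ^ m) r) = algebraMap ℝ (A ⧸ I) r := fun r => rfl
  have hkerN : ∀ x : A ⧸ I ^ m, π x = 0 ↔ x ∈ N := by
    intro x
    obtain ⟨y, rfl⟩ := Ideal.Quotient.mk_surjective x
    rw [Ideal.Quotient.factor_mk, Ideal.Quotient.eq_zero_iff_mem]
    constructor
    · intro hy; exact Ideal.mem_map_of_mem _ hy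
    · intro hy
      rw [Ideal.mem_map_iff_of_surjective _ Ideal.Quotient.mk_surjective] at hy
      obtain ⟨z, hz, hzy⟩ := hy
      have h1 : z - y ∈ I ^ m := Ideal.Quotient.eq.1 hzy
      have h2 : z - y ∈ I := Ideal.pow_le_self hm h1
      have : y = z - (z - y) := by ring
      rw [this]
      exact I.sub_mem hz h2
  refine ⟨N, ?_, ?_, ?_⟩
  · intro x hx
    rw [Ideal.mem_map_iff_of_surjective _ Ideal.Quotient.mk_surjective] at hx
    obtain ⟨y, hy, rfl⟩ := hx
    exact ⟨m, by rw [← map_pow, Ideal.Quotient.eq_zero_iff_mem]; exact Ideal.pow_mem_pow hy m⟩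
  · have h1 : Module.Finite ℝ (Submodule.restrictScalars ℝ N) := inferInstance
    exact h1
  · intro a
    obtain ⟨r, hr⟩ := hsurj (π a)
    have hmem : a - algebraMap ℝ (A ⧸ I ^ m) r ∈ N :=
      (hkerN _).1 (by rw [map_sub, hπalg, hr, sub_self])
    refine ⟨(r, ⟨a - algebraMap ℝ (A ⧸ I ^ m) r, hmem⟩), by simp, ?_⟩
    rintro ⟨r', n'⟩ h
    simp only at h
    have hπn' : π (n' : A ⧸ I ^ m) = 0 := (hkerN _).2 n'.2
    have hπa : π a = algebraMap ℝ (A ⧸ I) r' := by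
      rw [h, map_add, hπn', add_zero, hπalg]
    have hrr : r' = r := (algebraMap ℝ (A ⧸ I)).injective (hπa.symm.trans hr.symm)
    refine Prod.ext hrr (Subtype.ext ?_)
    show (n' : A ⧸ I ^ m) = a - algebraMap ℝ (A ⧸ I ^ m) r
    rw [← hrr, h]; ring

/-- Every formally realthe direct sum (product) of finitely many Weil algebras. -/
theorem formallyReal_directSum_of_weilAlgebras
    {A : Type} [CommRing A] [Algebra ℝ A] [FiniteDimensional ℝ A]
    (hA : FormallyReal A) :
    ∃ (k : ℕ) (B : Fin k → Type) (cr : ∀ i, CommRing (B i))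
      (alg : ∀ i, Algebra ℝ (B i)),
      (∀ i, IsWeilAlgebra (B i)) ∧ Nonempty (A ≃ₐ[ℝ] ((i : Fin k) → B i)) := by
  classical
  haveI hart : IsArtinianRing A := isArtinian_of_tower ℝ inferInstance
  have hfin : {I : Ideal A | I.IsMaximal}.Finite := IsArtinianRing.setOfPred_isMaximal_finite A
  letI : Fintype ↥{I : Ideal A | I.IsMaximal} := hfin.fintype
  obtain ⟨n, hn⟩ := IsArtinianRing.isNilpotent_jacobson_bot (R := A)
  set m := n + 1 with hmdef
  have hm : (Ideal.jacobson (⊥ : Ideal A)) ^ m = ⊥ := by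
    rw [pow_succ, hn]; exact Ideal.bot_mul _
  set k := Fintype.card ↥{I : Ideal A | I.IsMaximal} with hk
  let e : ↥{I : Ideal A | I.IsMaximal} ≃ Fin k := Fintype.equivFin _
  let Mi : Fin k → Ideal A := fun i => ((e.symm i : ↥{I : Ideal A | I.IsMaximal}) : Ideal A)
  have hMi : ∀ i, (Mi i).IsMaximal := fun i => (e.symm i).2
  let f : Fin k → Ideal A := fun i => Mi i ^ m
  have hpair : Pairwise (IsCoprime on f) := by
    intro i j hij
    have hne : Mi i ≠ Mi j := fun h => hij (by
      have := e.symm.injective (Subtype.ext h); exact this)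
    exact (Ideal.isCoprime_iff_sup_eq.mpr ((hMi i).coprime_of_ne (hMi j) hne)).pow
  have hiMi : ⨅ i, Mi i = Ideal.jacobson (⊥ : Ideal A) := by
    rw [Ideal.jacobson]
    have hset : {J : Ideal A | ⊥ ≤ J ∧ J.IsMaximal} = {I : Ideal A | I.IsMaximal} := by
      ext J; simp
    rw [hset, sInf_eq_iInf']
    exact Equiv.iInf_comp (g := fun I : ↥{I : Ideal A | I.IsMaximal} => (I : Ideal A)) e.symm
  have hinf : ⨅ i, f i = ⊥ := by
    refine le_antisymm ?_ bot_le
    have h1 : ⨅ i, f i ≤ ∏ i, f i := by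
      have := iInf_le_prod_of_pairwise_coprime f hpair Finset.univ
      simpa using this
    refine h1.trans ?_
    have h2 : (∏ i, f i) = (∏ i, Mi i) ^ m := by rw [Finset.prod_pow]
    rw [h2]
    have h3 : (∏ i, Mi i) ≤ ⨅ i, Mi i := by
      refine Ideal.prod_le_inf.trans ?_
      simp [Finset.inf_eq_iInf]
    calc (∏ i, Mi i) ^ m ≤ (⨅ i, Mi i) ^ m := Ideal.pow_right_mono h3 m
    _ = ⊥ := by rw [hiMi, hm]
  let φ : A →ₐ[ℝ] ∀ i, A ⧸ f i := Pi.algHom ℝ (fun i => A ⧸ f i) (fun i => Ideal.Quotient.mkₐ ℝ (f i))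
  have hinj : Function.Injective φ := by
    rw [injective_iff_map_eq_zero]
    intro x hx
    have hx' : ∀ i, x ∈ f i := fun i =>
      Ideal.Quotient.eq_zero_iff_mem.1 (by simpa [φ] using congrFun hx i)
    have : x ∈ ⨅ i, f i := Submodule.mem_iInf _ |>.2 hx'
    rwa [hinf, Submodule.mem_bot] at this
  have hsurj : Function.Surjective φ := by
    intro x
    obtain ⟨r, hr⟩ := Ideal.pi_quotient_surjective hpair x
    exact ⟨r, funext fun i => hr i⟩
  exact ⟨k, fun i => A ⧸ f i, fun i => inferInstance, fun i => inferInstance,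
    fun i => isWeilAlgebra_quotient_pow hA (Mi i) (hMi i) (Nat.succ_ne_zero n),
    ⟨AlgEquiv.ofBijective φ ⟨hinj, hsurj⟩⟩⟩
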